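/- arXiv:1407.2691 — 2 statements merged into one kernel-verified Lean document; each statement's English description precedes it below -/
import Mathlib

section
/- Let P = ⊕_{i=1}^n P_i with P_i = (Λe_i)^{t_i}, and let C = ⊕_{i=1}^n 𝐂_i where each 𝐂_i ⊆ JP_i is a submodule. Then the following are equivalent: (i) for every Λ-automorphism g of P, g(C) = ⊕_{i=1}^n (g(C) ∩ P_i); (ii) for every Λ-automorphism g of P there exist Λ-automorphisms f_i of P_i (1 ≤ i ≤ n) with g(C) = ⊕_{i=1}^n f_i(𝐂_i); (iii) f(𝐂_i) ⊆ 𝐂_k whenever i ≠ k and f : P_i → P_k is a Λ-homomorphism. -/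
open Submodule

/-- The submodule `J•M` of `M`, where `J` is the Jacobson radical of `Λ`. -/
def radsub (Λ : Type) [Ring Λ] (M : Type) [AddCommGroup M] [Module Λ M] :
    Submodule Λ M :=
  Submodule.span Λ {x : M | ∃ a ∈ (⊥ : Ideal Λ).jacobson, ∃ m : M, x = a • m}

/-- Riedtmann–Zwara: `N` is a degeneration of `M` if there is a short exact sequence
`0 → Z → Z ⊕ M → N → 0` for some finite `Λ`-module `Z`. -/
def IsDegeneration (Λ : Type) [Ring Λ] (M N : Type) [AddCommGroup M] [Module Λ M]
    [AddCommGroup N] [Module Λ N] : Prop :=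
  ∃ (Z : Type) (_ : AddCommGroup Z) (_ : Module Λ Z) (_ : Module.Finite Λ Z)
    (f : Z →ₗ[Λ] Z × M) (g : Z × M →ₗ[Λ] N),
      Function.Injective f ∧ Function.Surjective g ∧
        LinearMap.range f = LinearMap.ker g

/-- A degeneration is top-stable if it has the same top `M/JM`. -/
def IsTopStableDegeneration (Λ : Type) [Ring Λ] (M N : Type) [AddCommGroup M] [Module Λ M]
    [AddCommGroup N] [Module Λ N] : Prop :=
  IsDegeneration Λ M N ∧
    Nonempty ((N ⧸ radsub Λ N) ≃ₗ[Λ] (M ⧸ radsub Λ M))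

/-- `M` has no proper top-stable degeneration. -/
def HasNoProperTopStableDegeneration (Λ : Type) [Ring Λ] (M : Type) [AddCommGroup M]
    [Module Λ M] : Prop :=
  ∀ (N : Type) (_ : AddCommGroup N) (_ : Module Λ N) (_ : Module.Finite Λ N),
    IsTopStableDegeneration Λ M N → Nonempty (N ≃ₗ[Λ] M)

/-- The left ideal `Λx` as a submodule of `Λ`. -/
def Pe (Λ : Type) [Ring Λ] (x : Λ) : Submodule Λ Λ := Submodule.span Λ {x}

/-- The left ideal `Jx` as a submodule of `Λ`. -/
def Je (Λ : Type) [Ring Λ] (x : Λ) : Submodule Λ Λ :=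
  Submodule.span Λ {y : Λ | ∃ a ∈ (⊥ : Ideal Λ).jacobson, y = a * x}


set_option linter.unusedSectionVars false
set_option maxHeartbeats 1000000


open Submodule

section Jac
variable {Λ : Type} [Ring Λ]

local notation "J" => Ideal.jacobson (⊥ : Ideal Λ)

lemma jac_mul_right {a : Λ} (ha : a ∈ J) (c : Λ) : a * c ∈ J := by
  exact Ideal.mul_mem_right c _ ha

lemma jac_left_inv {a : Λ} (ha : a ∈ J) : ∃ s : Λ, s * (1 - a) = 1 := by
  obtain ⟨s, hs⟩ := Ideal.exists_mul_sub_mem_of_sub_one_mem_jacobson (1 - a) (by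
    simpa using (neg_mem ha : -a ∈ J))
  refine ⟨s, ?_⟩
  rw [Ideal.mem_bot, sub_eq_zero] at hs
  exact hs

variable {M : Type} [AddCommGroup M] [Module Λ M]

lemma mem_jac_smul_span_singleton {x u : M} (hu : u ∈ J • span Λ ({x} : Set M)) :
    ∃ a ∈ J, a • x = u := by
  refine Submodule.smul_induction_on hu ?_ ?_
  · intro r hr n hn
    obtain ⟨c, rfl⟩ := mem_span_singleton.mp hn
    exact ⟨r * c, jac_mul_right hr c, mul_smul r c x⟩
  · rintro y z ⟨a, ha, rfl⟩ ⟨b, hb, rfl⟩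
    exact ⟨a + b, add_mem ha hb, add_smul a b x⟩

lemma nak_span (s : Finset M) (h : span Λ (s : Set M) ≤ J • span Λ (s : Set M)) :
    span Λ (s : Set M) = ⊥ := by
  classical
  induction s using Finset.induction_on with
  | empty => simp
  | @insert x t hx IH =>
    rw [Finset.coe_insert, span_insert] at h ⊢
    rw [smul_sup] at h
    have hxmem : x ∈ J • span Λ ({x} : Set M) ⊔ J • span Λ (t : Set M) :=
      h (le_sup_left (α := Submodule Λ M) (mem_span_singleton_self x))
    obtain ⟨u, hu, w, hw, hxw⟩ := mem_sup.mp hxmem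
    obtain ⟨a, haJ, rfl⟩ := mem_jac_smul_span_singleton hu
    obtain ⟨sI, hsI⟩ := jac_left_inv haJ
    have hxJt : x ∈ J • span Λ (t : Set M) := by
      have h1 : (1 - a) • x = w := by
        rw [sub_smul, one_smul, eq_comm, eq_sub_iff_add_eq, add_comm]; exact hxw
      have : x = sI • w := by
        rw [← h1, ← mul_smul, hsI, one_smul]
      rw [this]
      exact Submodule.smul_mem _ _ hw
    have hxt : x ∈ span Λ (t : Set M) := smul_le_right hxJt
    have hspan : span Λ ({x} : Set M) ⊔ span Λ (t : Set M) = span Λ (t : Set M) := by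
      rw [sup_eq_right]
      exact span_le.mpr (Set.singleton_subset_iff.mpr hxt)
    rw [hspan] at h ⊢
    refine IH (h.trans (sup_le ?_ le_rfl))
    exact (smul_mono le_rfl (span_le.mpr (Set.singleton_subset_iff.mpr hxt))).trans le_rfl

lemma nak_fg {N : Submodule Λ M} (hfg : N.FG) (h : N ≤ J • N) : N = ⊥ := by
  obtain ⟨s, rfl⟩ := hfg
  exact nak_span s h

lemma nak_top [Module.Finite Λ M] {N : Submodule Λ M} (h : N ⊔ J • (⊤ : Submodule Λ M) = ⊤) :
    N = ⊤ := by
  have hQ : (⊤ : Submodule Λ (M ⧸ N)) ≤ J • (⊤ : Submodule Λ (M ⧸ N)) := by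
    have hmap := congrArg (Submodule.map N.mkQ) h
    rw [Submodule.map_sup, Submodule.map_smul'', Submodule.map_top, Submodule.range_mkQ] at hmap
    have hN : Submodule.map N.mkQ N = ⊥ := by
      rw [eq_bot_iff]
      rintro _ ⟨y, hy, rfl⟩
      simpa using (Submodule.Quotient.mk_eq_zero N).mpr hy
    rw [hN, bot_sup_eq] at hmap
    rw [hmap]
  have : (⊤ : Submodule Λ (M ⧸ N)) = ⊥ := nak_fg Module.Finite.fg_top hQ
  rw [eq_top_iff]
  intro x _
  have : N.mkQ x ∈ (⊥ : Submodule Λ (M ⧸ N)) := this ▸ mem_top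
  simpa using (Submodule.Quotient.mk_eq_zero N).mp (by simpa using this)

end Jac

open Polynomial

lemma idem_lift {A : Type} [Ring A] :
    ∀ (m : ℕ) (r : A), (r * r - r) ^ m = 0 →
      ∃ p q : Polynomial ℤ,
        (aeval r p) * (aeval r p) = aeval r p ∧
        aeval r p = r + (r * r - r) * aeval r q
  | 0, r, h => by
    have h10 : (1 : A) = 0 := by simpa using h
    have hall : ∀ a : A, a = 0 := fun a => by
      calc a = a * 1 := (mul_one a).symm
      _ = a * 0 := by rw [h10]
      _ = 0 := mul_zero a
    exact ⟨X, 0, by rw [aeval_X]; rw [hall (r*r), hall r], by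
      rw [aeval_X, map_zero, mul_zero, add_zero]⟩
  | 1, r, h => by
    have hr : r * r = r := by rwa [pow_one, sub_eq_zero] at h
    exact ⟨X, 0, by rw [aeval_X]; exact hr, by rw [aeval_X, map_zero, mul_zero, add_zero]⟩
  | (k+2), r, h => by
    set f : Polynomial ℤ := 3*X^2 - 2*X^3 with hf
    have hd : aeval r ((X:Polynomial ℤ)^2 - X) = r * r - r := by
      simp [pow_two]
    have hdpow : ∀ l : ℕ, aeval r (((X:Polynomial ℤ)^2 - X)^l) = (r*r - r)^l := by
      intro l; rw [map_pow, hd]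
    set r' : A := aeval r f with hr'
    have hδ' : r' * r' - r' = aeval r (f*f - f) := by
      rw [map_sub, map_mul]
    have hbase : f*f - f = (((X:Polynomial ℤ)^2 - X)^2) * (4*X^2 - 4*X - 3) := by
      rw [hf]; ring
    have hpoly : (f*f - f)^(k+1) =
        ((X:Polynomial ℤ)^2 - X)^(k+2) * (((X:Polynomial ℤ)^2 - X)^k * (4*X^2 - 4*X - 3)^(k+1)) := by
      rw [hbase, mul_pow, ← pow_mul, show 2*(k+1) = (k+2)+k from by ring, pow_add]
      ring
    have hnil : (r' * r' - r')^(k+1) = 0 := by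
      rw [hδ', ← map_pow, hpoly, map_mul, hdpow, h, zero_mul]
    obtain ⟨p', q', hu1, hu2⟩ := idem_lift (k+1) r' hnil
    have hcomp : ∀ pp : Polynomial ℤ, aeval r' pp = aeval r (pp.comp f) := by
      intro pp; rw [aeval_comp]
    set q : Polynomial ℤ := (1 - 2*X) + ((X:Polynomial ℤ)^2 - X)*(4*X^2 - 4*X - 3)*(q'.comp f)
      with hq
    have hpid : f + (f*f - f)*(q'.comp f) = X + ((X:Polynomial ℤ)^2 - X)*q := by
      rw [hq, hf]; ring
    refine ⟨p'.comp f, q, by rw [← hcomp]; exact hu1, ?_⟩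
    rw [← hcomp]
    calc aeval r' p' = r' + (r'*r' - r') * aeval r' q' := hu2
    _ = aeval r (f + (f*f - f)*(q'.comp f)) := by
        rw [map_add, map_mul, ← hδ', ← hcomp, hr']
    _ = aeval r (X + ((X:Polynomial ℤ)^2 - X)*q) := by rw [hpid]
    _ = r + (r*r - r) * aeval r q := by rw [map_add, map_mul, hd, aeval_X]
open Submodule

section Pi
variable {R : Type} [Ring R] {ι : Type} [Fintype ι] [DecidableEq ι]
  (M : ι → Type) [∀ i, AddCommGroup (M i)] [∀ i, Module R (M i)]

omit [Fintype ι] in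
lemma single_inj (i : ι) : Function.Injective (LinearMap.single R M i) := by
  intro a b h
  have := congrArg (fun z => z i) h
  simpa using this

lemma iSup_range_single : ⨆ i, LinearMap.range (LinearMap.single R M i) = ⊤ := by
  rw [eq_top_iff]
  intro x _
  rw [← Finset.univ_sum_single x]
  exact Submodule.sum_mem _ fun i _ =>
    (le_iSup (fun i => LinearMap.range (LinearMap.single R M i)) i)
      (LinearMap.mem_range_self _ _)

lemma pi_semisimple [∀ i, IsSemisimpleModule R (M i)] : IsSemisimpleModule R (∀ i, M i) := by
  refine isSemisimpleModule_of_isSemisimpleModule_submodule'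
    (p := fun i => LinearMap.range (LinearMap.single R M i)) (fun i => ?_) (iSup_range_single M)
  exact IsSemisimpleModule.congr
    (LinearEquiv.ofInjective (LinearMap.single R M i) (single_inj M i)).symm

end Pi

section Jac2
variable {Λ : Type} [Ring Λ]

local notation "J" => Ideal.jacobson (⊥ : Ideal Λ)

lemma jac_elem_nilpotent [IsArtinian Λ Λ] [IsNoetherian Λ Λ] {a : Λ} (ha : a ∈ J) :
    ∃ m, a ^ m = 0 := by
  classical
  set Jpow : ℕ → Submodule Λ Λ := fun m => (fun N => J • N)^[m] ⊤ with hJpow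
  have hsucc : ∀ m, Jpow (m+1) = J • Jpow m := by
    intro m; rw [hJpow]; simp [Function.iterate_succ_apply']
  have hanti : Antitone Jpow := by
    refine antitone_nat_of_succ_le fun m => ?_
    induction m with
    | zero => rw [hsucc]; exact le_top
    | succ k IH =>
      calc Jpow (k+2) = J • Jpow (k+1) := hsucc _
      _ ≤ J • Jpow k := smul_mono le_rfl IH
      _ = Jpow (k+1) := (hsucc _).symm
  obtain ⟨nn, hnn⟩ := IsArtinian.monotone_stabilizes
    (⟨fun m => OrderDual.toDual (Jpow m), hanti.dual_right⟩ : ℕ →o (Submodule Λ Λ)ᵒᵈ)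
  have hstab : Jpow nn = J • Jpow nn := by
    have := hnn (nn+1) (Nat.le_succ nn)
    rw [← hsucc]
    exact congrArg OrderDual.ofDual this
  have hbot : Jpow nn = ⊥ := nak_fg (IsNoetherian.noetherian _) hstab.le
  have hmem : ∀ m, a ^ m ∈ Jpow m := by
    intro m
    induction m with
    | zero => exact mem_top
    | succ k IH =>
      rw [hsucc, pow_succ']
      exact Submodule.smul_mem_smul ha IH
  refine ⟨nn, ?_⟩
  have := hmem nn
  rw [hbot] at this
  simpa using this

lemma quot_jac_semisimple [IsArtinian Λ Λ] :
    IsSemisimpleModule Λ (Λ ⧸ (J : Submodule Λ Λ)) := by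
  classical
  have wf : WellFounded ((· < ·) : Submodule Λ Λ → Submodule Λ Λ → Prop) := IsWellFounded.wf
  set S : Set (Submodule Λ Λ) :=
    {N | ∃ F : Finset (Submodule Λ Λ), (∀ m ∈ F, IsCoatom m) ∧ N = F.inf id} with hS
  have hStop : (⊤ : Submodule Λ Λ) ∈ S := ⟨∅, by simp, by simp⟩
  obtain ⟨N₀, hN₀S, hmin⟩ := wf.has_min S ⟨⊤, hStop⟩
  obtain ⟨F₀, hF₀, rfl⟩ := hN₀S
  have hJeq : (J : Ideal Λ) = F₀.inf id := by
    apply le_antisymm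
    · exact Finset.le_inf fun m hm =>
        sInf_le ⟨bot_le, Ideal.isMaximal_def.mpr (hF₀ m hm)⟩
    · refine le_sInf fun m' hm' => ?_
      by_contra hcon
      have hlt : F₀.inf id ⊓ m' < F₀.inf id :=
        lt_of_le_of_ne inf_le_left (fun heq => hcon (heq ▸ inf_le_right))
      refine hmin (F₀.inf id ⊓ m') ⟨insert m' F₀, ?_, ?_⟩ hlt
      · intro m hm
        rcases Finset.mem_insert.mp hm with h | h
        · exact h ▸ Ideal.isMaximal_def.mp hm'.2
        · exact hF₀ m h
      · rw [Finset.inf_insert]; simp [inf_comm]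
  -- the pi target is semisimple
  haveI hsimpleF : ∀ m : F₀, IsSimpleModule Λ (Λ ⧸ (m : Submodule Λ Λ)) := fun m =>
    isSimpleModule_iff_isCoatom.mpr (hF₀ m m.2)
  haveI : IsSemisimpleModule Λ (∀ m : F₀, Λ ⧸ (m : Submodule Λ Λ)) :=
    pi_semisimple _
  set Φ : Λ →ₗ[Λ] ∀ m : F₀, Λ ⧸ (m : Submodule Λ Λ) :=
    LinearMap.pi (fun m : F₀ => (m : Submodule Λ Λ).mkQ) with hΦ
  have hker : LinearMap.ker Φ = (J : Submodule Λ Λ) := by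
    rw [hΦ, LinearMap.ker_pi]
    have : ∀ m : F₀, LinearMap.ker (m : Submodule Λ Λ).mkQ = (m : Submodule Λ Λ) :=
      fun m => Submodule.ker_mkQ _
    simp_rw [this]
    rw [hJeq, Finset.inf_eq_iInf]
    rw [iInf_subtype]
    simp
  set Φbar := (J : Submodule Λ Λ).liftQ Φ hker.ge with hΦbar
  have hinj : Function.Injective Φbar := by
    rw [← LinearMap.ker_eq_bot]
    exact Submodule.ker_liftQ_eq_bot _ _ _ hker.le
  exact IsSemisimpleModule.of_injective Φbar hinj

end Jac2
open Submodule Polynomial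

section Top
variable {Λ : Type} [Ring Λ]

local notation "J" => Ideal.jacobson (⊥ : Ideal Λ)

lemma top_cyclic [IsArtinian Λ Λ] [IsNoetherian Λ Λ] (ε : Λ) (hε : ε * ε = ε)
    (hprim : ∀ f : Λ, f * f = f → f * ε = f → ε * f = f → f = 0 ∨ f = ε)
    (ybar : Λ ⧸ (J : Submodule Λ Λ))
    (hy : ybar ∈ span Λ {(J : Submodule Λ Λ).mkQ ε}) (hy0 : ybar ≠ 0) :
    span Λ {ybar} = span Λ {(J : Submodule Λ Λ).mkQ ε} := by
  classical
  set π := (J : Submodule Λ Λ).mkQ with hπ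
  set ebar := π ε with hebar
  by_contra hne
  haveI : IsSemisimpleModule Λ (Λ ⧸ (J : Submodule Λ Λ)) := quot_jac_semisimple
  set T : Submodule Λ (Λ ⧸ (J : Submodule Λ Λ)) := span Λ {ebar} with hT
  set Nt : Submodule Λ ↥T := Submodule.comap T.subtype (span Λ {ybar}) with hNt
  obtain ⟨N', hcompl⟩ := exists_isCompl Nt
  set pr : ↥T →ₗ[Λ] ↥T := Nt.subtype ∘ₗ (Nt.linearProjOfIsCompl N' hcompl) with hpr
  set eT : ↥T := ⟨ebar, mem_span_singleton_self _⟩ with heT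
  have hcyc : ∀ z : ↥T, ∃ c : Λ, c • eT = z := by
    intro z
    obtain ⟨c, hc⟩ := mem_span_singleton.mp z.2
    exact ⟨c, Subtype.ext (by simpa using hc)⟩
  set xb : ↥T := pr eT with hxb
  have hprN : ∀ z : ↥Nt, pr (z : ↥T) = (z : ↥T) := by
    intro z
    rw [hpr]
    exact congrArg Nt.subtype (Submodule.projectionOnto_apply_left hcompl z)
  have hpp : pr xb = xb := by
    rw [hxb, hpr]
    exact hprN _
  set yT : ↥T := ⟨ybar, hy⟩ with hyT
  have hyTN : yT ∈ Nt := by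
    rw [hNt]
    exact mem_span_singleton_self ybar
  have hxb0 : xb ≠ 0 := by
    intro h0
    obtain ⟨c, hc⟩ := hcyc yT
    have h1 : pr yT = yT := hprN ⟨yT, hyTN⟩
    rw [← hc, map_smul, ← hxb, h0, smul_zero, hc] at h1
    exact hy0 (by simpa [hyT] using congrArg Subtype.val h1.symm)
  obtain ⟨c, hc⟩ := mem_span_singleton.mp xb.2
  set w := c * ε with hw
  have hwval : π w = (xb : Λ ⧸ (J : Submodule Λ Λ)) := by
    rw [hw, ← smul_eq_mul, map_smul]
    exact hc
  set v := ε * w with hv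
  have hwε : w * ε = w := by rw [hw, mul_assoc, hε]
  have hvε : v * ε = v := by rw [hv, mul_assoc, hwε]
  have hεv : ε * v = v := by rw [hv, ← mul_assoc, hε]
  have hεeT : ε • eT = eT := by
    refine Subtype.ext ?_
    show ε • ebar = ebar
    rw [hebar, ← map_smul, smul_eq_mul, hε]
  have hεxb : ε • xb = xb := by
    rw [hxb, ← map_smul, hεeT]
  have hπv : π v = (xb : Λ ⧸ (J : Submodule Λ Λ)) := by
    rw [hv, ← smul_eq_mul, map_smul, hwval]
    exact congrArg Subtype.val hεxb
  have hvxb : v • eT = xb := by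
    refine Subtype.ext ?_
    show v • ebar = (xb : Λ ⧸ (J : Submodule Λ Λ))
    rw [hebar, ← map_smul, smul_eq_mul, hvε, hπv]
  have hπvv : π (v * v) = π v := by
    have h2 : v • xb = xb := by
      rw [hxb, ← map_smul, hvxb, ← hxb]
      exact hpp
    calc π (v * v) = v • π v := by rw [← smul_eq_mul, map_smul]
    _ = v • (xb : Λ ⧸ (J : Submodule Λ Λ)) := by rw [hπv]
    _ = ((v • xb : ↥T) : Λ ⧸ (J : Submodule Λ Λ)) := rfl
    _ = (xb : Λ ⧸ (J : Submodule Λ Λ)) := by rw [h2]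
    _ = π v := hπv.symm
  have hδJ : v * v - v ∈ J := by
    have := (Submodule.Quotient.eq (J : Submodule Λ Λ)).mp hπvv
    exact this
  obtain ⟨m, hm⟩ := jac_elem_nilpotent hδJ
  obtain ⟨p, q, hu1, hu2⟩ := idem_lift m v hm
  set u := aeval v p with hu
  set z := aeval v q with hz
  have hvz : Commute v z := by
    have := (Commute.all (X : Polynomial ℤ) q).map (aeval v)
    rwa [aeval_X] at this
  have hδz : Commute (v * v - v) z := (hvz.mul_left hvz).sub_left hvz
  have hδε : (v * v - v) * ε = v * v - v := by
    rw [sub_mul, mul_assoc, hvε]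
  have hεδ : ε * (v * v - v) = v * v - v := by
    rw [mul_sub, ← mul_assoc, hεv]
  have huε : u * ε = u := by
    rw [hu2, add_mul, hvε, hδz.eq, mul_assoc, hδε, ← hδz.eq]
  have hεu : ε * u = u := by
    rw [hu2, mul_add, hεv, ← mul_assoc, hεδ]
  have humem : u - v ∈ (J : Submodule Λ Λ) := by
    rw [hu2]
    have h3 : v + (v * v - v) * z - v = z • (v * v - v) := by
      rw [smul_eq_mul, ← hδz.eq, add_sub_cancel_left]
    rw [h3]
    exact Submodule.smul_mem _ z hδJ
  have hπu : π u = (xb : Λ ⧸ (J : Submodule Λ Λ)) := by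
    have h4 : π u = π v := by
      show Submodule.Quotient.mk u = Submodule.Quotient.mk v
      exact (Submodule.Quotient.eq _).mpr humem
    rw [h4, hπv]
  rcases hprim u hu1 huε hεu with h0 | hεeq
  · rw [h0, map_zero] at hπu
    exact hxb0 (Subtype.ext hπu.symm)
  · rw [hεeq] at hπu
    have hxbeT : xb = eT := Subtype.ext hπu.symm
    have hprid : ∀ zz : ↥T, pr zz = zz := by
      intro zz
      obtain ⟨cc, hcc⟩ := hcyc zz
      rw [← hcc, map_smul, ← hxb, hxbeT]
    have hN'bot : N' = ⊥ := by
      rw [eq_bot_iff]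
      intro x hx
      have h1 : pr x = 0 := by
        rw [hpr]
        have := Submodule.linearProjOfIsCompl_apply_right hcompl ⟨x, hx⟩
        simp only [LinearMap.coe_comp, Function.comp_apply]
        rw [show ((⟨x, hx⟩ : ↥N') : ↥T) = x from rfl] at this
        exact (congrArg Nt.subtype this).trans (map_zero _)
      have := (hprid x).symm.trans h1
      simp [this]
    have hNtop : Nt = ⊤ := by
      have := hcompl.sup_eq_top
      rwa [hN'bot, sup_bot_eq] at this
    refine hne (le_antisymm (span_le.mpr (Set.singleton_subset_iff.mpr hy)) ?_)
    intro zz hzz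
    have : (⟨zz, hzz⟩ : ↥T) ∈ Nt := hNtop ▸ mem_top
    simpa [hNt] using this
end Top
open Submodule


section KeyLemma
variable {Λ : Type} [Ring Λ]

local notation "J" => Ideal.jacobson (⊥ : Ideal Λ)

lemma pe_self_mem (e : Λ) : e ∈ Pe Λ e := mem_span_singleton_self e

lemma pe_elem_mul {e : Λ} (he : e * e = e) {x : Λ} (hx : x ∈ Pe Λ e) : x * e = x := by
  obtain ⟨a, rfl⟩ := mem_span_singleton.mp hx
  rw [smul_eq_mul, mul_assoc, he]

/-- the canonical generator of `Pe Λ e`. -/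
def uE (e : Λ) : ↥(Pe Λ e) := ⟨e, pe_self_mem e⟩

lemma pe_eq_smul_uE {e : Λ} (he : e * e = e) (x : ↥(Pe Λ e)) : x = (x : Λ) • uE e :=
  Subtype.ext (by
    show (x : Λ) = (x : Λ) • e
    rw [smul_eq_mul, pe_elem_mul he x.2])

lemma mem_jsmul_top_iff {e : Λ} (he : e * e = e) (z : ↥(Pe Λ e)) :
    z ∈ (J • (⊤ : Submodule Λ ↥(Pe Λ e))) ↔ (z : Λ) ∈ J := by
  constructor
  · intro hz
    refine Submodule.smul_induction_on hz ?_ ?_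
    · intro r hr n _
      show (r • (n : ↥(Pe Λ e)) : ↥(Pe Λ e)).1 ∈ J
      have : ((r • n : ↥(Pe Λ e)) : Λ) = r * (n : Λ) := rfl
      rw [this]
      exact jac_mul_right hr _
    · intro a b ha hb
      exact add_mem ha hb
  · intro hz
    have := pe_eq_smul_uE he z
    rw [this]
    exact Submodule.smul_mem_smul hz mem_top

lemma pe_projective {e : Λ} (he : e * e = e) : Module.Projective Λ ↥(Pe Λ e) := by
  set σ : Λ →ₗ[Λ] ↥(Pe Λ e) :=
    { toFun := fun a => ⟨a * e, by rw [← smul_eq_mul]; exact Submodule.smul_mem _ a (pe_self_mem e)⟩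
      map_add' := fun a b => Subtype.ext (add_mul a b e)
      map_smul' := fun c a => Subtype.ext (by simp [smul_eq_mul, mul_assoc]) } with hσ
  refine Module.Projective.of_split (Pe Λ e).subtype σ ?_
  ext x
  exact congrArg Subtype.val (Subtype.ext (pe_elem_mul he x.2) :
    (⟨(x:Λ) * e, _⟩ : ↥(Pe Λ e)) = x)

lemma hom_pe_into_jac [IsArtinian Λ Λ] [IsNoetherian Λ Λ] {e f : Λ}
    (he : e * e = e) (hf : f * f = f)
    (hprime : ∀ g : Λ, g * g = g → g * e = g → e * g = g → g = 0 ∨ g = e)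
    (hprimf : ∀ g : Λ, g * g = g → g * f = g → f * g = g → g = 0 ∨ g = f)
    (hnoiso : IsEmpty (↥(Pe Λ e) ≃ₗ[Λ] ↥(Pe Λ f)))
    (φ : ↥(Pe Λ e) →ₗ[Λ] ↥(Pe Λ f)) (x : ↥(Pe Λ e)) :
    (φ x : Λ) ∈ J := by
  classical
  set y : ↥(Pe Λ f) := φ (uE e) with hy
  have hφx : ∀ x : ↥(Pe Λ e), φ x = (x : Λ) • y := by
    intro x
    conv_lhs => rw [pe_eq_smul_uE he x]
    rw [map_smul, hy]
  by_cases hyJ : (y : Λ) ∈ J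
  · rw [hφx x]
    show (x : Λ) • (y : Λ) ∈ J
    rw [smul_eq_mul]
    exact Submodule.smul_mem _ _ hyJ
  · exfalso
    haveI : Module.Finite Λ ↥(Pe Λ f) :=
      Module.Finite.iff_fg.mpr (IsNoetherian.noetherian (Pe Λ f))
    set π := ((J : Ideal Λ) : Submodule Λ Λ).mkQ with hπdef
    have hπy : π (y : Λ) ∈ span Λ {π f} := by
      obtain ⟨a, ha⟩ := mem_span_singleton.mp y.2
      rw [← ha, map_smul]
      exact Submodule.smul_mem _ a (mem_span_singleton_self _)
    have hπy0 : π (y : Λ) ≠ 0 := by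
      intro h0
      exact hyJ ((Submodule.Quotient.mk_eq_zero _).mp (by simpa [hπdef] using h0))
    have hTC := top_cyclic f hf hprimf (π (y : Λ)) hπy hπy0
    have hspan : span Λ {y} = (⊤ : Submodule Λ ↥(Pe Λ f)) := by
      refine nak_top ?_
      rw [eq_top_iff]
      intro z _
      have hz2 : π (z : Λ) ∈ span Λ {π (y : Λ)} := by
        rw [hTC]
        obtain ⟨a, ha⟩ := mem_span_singleton.mp z.2
        rw [← ha, map_smul]
        exact Submodule.smul_mem _ a (mem_span_singleton_self _)
      obtain ⟨c, hc⟩ := mem_span_singleton.mp hz2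
      have hd : (z : Λ) - c * (y : Λ) ∈ J := by
        have : π ((z:Λ)) = π (c * (y:Λ)) := by
          rw [← smul_eq_mul, map_smul, hc]
        have h5 := (Submodule.Quotient.eq ((J : Ideal Λ) : Submodule Λ Λ)).mp this
        exact h5
      have hwmem : (z : Λ) - c * (y : Λ) ∈ Pe Λ f := by
        refine sub_mem z.2 ?_
        rw [← smul_eq_mul]
        exact Submodule.smul_mem _ c y.2
      have hzdec : z = c • y + (⟨(z:Λ) - c * (y:Λ), hwmem⟩ : ↥(Pe Λ f)) := by
        refine Subtype.ext ?_
        show (z : Λ) = c * (y:Λ) + ((z:Λ) - c * (y:Λ))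
        abel
      rw [hzdec]
      refine Submodule.add_mem_sup ?_ ?_
      · exact Submodule.smul_mem _ c (mem_span_singleton_self y)
      · exact (mem_jsmul_top_iff hf _).mpr hd
    have hsurj : Function.Surjective φ := by
      intro b
      have hb : b ∈ span Λ {y} := hspan ▸ mem_top
      obtain ⟨a, ha⟩ := mem_span_singleton.mp hb
      exact ⟨a • uE e, by rw [map_smul, ← hy, ha]⟩
    haveI : Module.Projective Λ ↥(Pe Λ f) := pe_projective hf
    obtain ⟨s, hs⟩ := Module.projective_lifting_property φ LinearMap.id hsurj
    set ee : ↥(Pe Λ e) →ₗ[Λ] ↥(Pe Λ e) := s ∘ₗ φ with hee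
    have heeapp : ∀ x : ↥(Pe Λ e), ee x = (x : Λ) • ee (uE e) := by
      intro x
      conv_lhs => rw [pe_eq_smul_uE he x]
      rw [map_smul]
    set xE : Λ := (ee (uE e) : Λ) with hxE
    have hxEe : xE * e = xE := pe_elem_mul he (ee (uE e)).2
    have heE : e • uE e = uE e := Subtype.ext (by show e • e = e; rw [smul_eq_mul, he])
    have hexE : e * xE = xE := by
      have : ee (e • uE e) = e • ee (uE e) := map_smul ee e (uE e)
      rw [heE] at this
      exact (congrArg Subtype.val this).symm
    have hidem : xE * xE = xE := by
      have h6 : ee (ee (uE e)) = ee (uE e) := by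
        rw [hee]
        show s (φ (s (φ (uE e)))) = s (φ (uE e))
        have := congrArg (fun (g : ↥(Pe Λ f) →ₗ[Λ] ↥(Pe Λ f)) => g (φ (uE e))) hs
        simp only [LinearMap.coe_comp, Function.comp_apply, LinearMap.id_apply] at this
        rw [this]
      have h7 := heeapp (ee (uE e))
      rw [h6] at h7
      exact (congrArg Subtype.val h7).symm
    rcases hprime xE hidem hxEe hexE with h0 | heq
    · -- ee (uE e) = 0, so s y = 0, so y = 0, contradiction with hyJ
      have h8 : ee (uE e) = 0 := Subtype.ext (by rw [← hxE, h0]; rfl)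
      have h9 : s y = 0 := h8
      have h10 : φ (s y) = y := by
        have := congrArg (fun (g : ↥(Pe Λ f) →ₗ[Λ] ↥(Pe Λ f)) => g y) hs
        simpa using this
      rw [h9, map_zero] at h10
      exact hyJ (by rw [← h10]; exact zero_mem _)
    · -- ee = id, φ injective, get an iso
      have hid : ∀ x : ↥(Pe Λ e), ee x = x := by
        intro x
        rw [heeapp x]
        have : ee (uE e) = uE e := Subtype.ext (by rw [← hxE, heq]; rfl)
        rw [this, ← pe_eq_smul_uE he x]
      have hinj : Function.Injective φ := by
        intro a b hab
        have ha := hid a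
        have hb := hid b
        calc a = s (φ a) := ha.symm
        _ = s (φ b) := by rw [hab]
        _ = b := hb
      exact hnoiso.false (LinearEquiv.ofBijective φ ⟨hinj, hsurj⟩)

end KeyLemma
open Submodule

section PiHelp
variable {R : Type} [Ring R] {ι : Type} [Fintype ι] [DecidableEq ι]
  {M : ι → Type} [∀ i, AddCommGroup (M i)] [∀ i, Module R (M i)]

lemma pi_eq_iSup_map_single (D : ∀ i, Submodule R (M i)) :
    Submodule.pi Set.univ D = ⨆ i, Submodule.map (LinearMap.single R M i) (D i) := by
  apply le_antisymm
  · intro x hx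
    rw [← Finset.univ_sum_single x]
    refine Submodule.sum_mem _ fun i _ => ?_
    refine (le_iSup (fun i => Submodule.map (LinearMap.single R M i) (D i)) i) ?_
    exact ⟨x i, hx i (Set.mem_univ i), rfl⟩
  · refine iSup_le fun i => ?_
    rintro _ ⟨d, hd, rfl⟩
    intro j _
    by_cases hji : j = i
    · subst hji; simpa using hd
    · show Pi.single i d j ∈ D j
      rw [Pi.single_eq_of_ne hji]
      exact zero_mem _

lemma pi_inf_range_single (D : ∀ i, Submodule R (M i)) (i : ι) :
    Submodule.pi Set.univ D ⊓ LinearMap.range (LinearMap.single R M i) =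
      Submodule.map (LinearMap.single R M i) (D i) := by
  apply le_antisymm
  · rintro x ⟨hx, v, rfl⟩
    exact ⟨v, by simpa using hx i (Set.mem_univ i), rfl⟩
  · rintro _ ⟨d, hd, rfl⟩
    refine ⟨?_, ⟨d, rfl⟩⟩
    intro j _
    by_cases hji : j = i
    · subst hji; simpa using hd
    · show Pi.single i d j ∈ D j
      rw [Pi.single_eq_of_ne hji]
      exact zero_mem _

end PiHelp

section RadPi
variable {Λ : Type} [Ring Λ]
local notation "J" => Ideal.jacobson (⊥ : Ideal Λ)

lemma mem_jsmul_top_pi {f : Λ} (hf : f * f = f) {b : ℕ}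
    (w : Fin b → ↥(Pe Λ f)) (hw : ∀ bb, ((w bb : Λ) ∈ J)) :
    w ∈ (J • (⊤ : Submodule Λ (Fin b → ↥(Pe Λ f)))) := by
  classical
  rw [← Finset.univ_sum_single w]
  refine Submodule.sum_mem _ fun bb _ => ?_
  have h1 : (Pi.single bb (w bb) : Fin b → ↥(Pe Λ f)) ∈
      Submodule.map (LinearMap.single Λ (fun _ : Fin b => ↥(Pe Λ f)) bb)
        (J • (⊤ : Submodule Λ ↥(Pe Λ f))) :=
    ⟨w bb, (mem_jsmul_top_iff hf _).mpr (hw bb), rfl⟩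
  have h2 : Submodule.map (LinearMap.single Λ (fun _ : Fin b => ↥(Pe Λ f)) bb)
      (J • (⊤ : Submodule Λ ↥(Pe Λ f))) ≤ J • ⊤ := by
    rw [Submodule.map_smul'']
    exact smul_mono le_rfl le_top
  exact h2 h1

lemma hom_pi_into_jac [IsArtinian Λ Λ] [IsNoetherian Λ Λ] {e f : Λ}
    (he : e * e = e) (hf : f * f = f)
    (hprime : ∀ g : Λ, g * g = g → g * e = g → e * g = g → g = 0 ∨ g = e)
    (hprimf : ∀ g : Λ, g * g = g → g * f = g → f * g = g → g = 0 ∨ g = f)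
    (hnoiso : IsEmpty (↥(Pe Λ e) ≃ₗ[Λ] ↥(Pe Λ f))) {a b : ℕ}
    (ψ : (Fin a → ↥(Pe Λ e)) →ₗ[Λ] (Fin b → ↥(Pe Λ f))) (v : Fin a → ↥(Pe Λ e)) :
    ψ v ∈ (J • (⊤ : Submodule Λ (Fin b → ↥(Pe Λ f)))) := by
  classical
  refine mem_jsmul_top_pi hf _ fun bb => ?_
  have hv : ψ v = ∑ aa, ψ (Pi.single aa (v aa)) := by
    rw [← map_sum, Finset.univ_sum_single]
  rw [hv]
  have : ((∑ aa, ψ (Pi.single aa (v aa))) bb) = ∑ aa, (ψ (Pi.single aa (v aa)) bb) :=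
    Finset.sum_apply _ _ _
  rw [this]
  rw [AddSubmonoidClass.coe_finset_sum]
  refine Submodule.sum_mem _ fun aa _ => ?_
  exact hom_pe_into_jac he hf hprime hprimf hnoiso
    ((LinearMap.proj bb) ∘ₗ ψ ∘ₗ (LinearMap.single Λ (fun _ : Fin a => ↥(Pe Λ e)) aa)) _

end RadPi

section TwoOne
variable {R : Type} [Ring R] {ι : Type} [Fintype ι] [DecidableEq ι]
  {M : ι → Type} [∀ i, AddCommGroup (M i)] [∀ i, Module R (M i)]

lemma two_imp_one (CC : ∀ i, Submodule R (M i))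
    (g : (∀ i, M i) ≃ₗ[R] (∀ i, M i)) (f : ∀ i, (M i) ≃ₗ[R] (M i))
    (hf : Submodule.map (g : (∀ i, M i) →ₗ[R] _) (Submodule.pi Set.univ CC) =
      Submodule.pi Set.univ (fun i => Submodule.map ((f i : M i →ₗ[R] M i)) (CC i))) :
    Submodule.map (g : (∀ i, M i) →ₗ[R] _) (Submodule.pi Set.univ CC) =
      ⨆ i, (Submodule.map (g : (∀ i, M i) →ₗ[R] _) (Submodule.pi Set.univ CC) ⊓
        LinearMap.range (LinearMap.single R M i)) := by
  rw [hf]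
  exact Eq.trans
    (pi_eq_iSup_map_single (fun i => Submodule.map ((f i : M i →ₗ[R] M i)) (CC i)))
    (iSup_congr fun i =>
      (pi_inf_range_single (fun i => Submodule.map ((f i : M i →ₗ[R] M i)) (CC i)) i).symm)

end TwoOne
open Submodule

section Main
variable {Λ : Type} [Ring Λ] {n : ℕ} {e : Fin n → Λ} {t : Fin n → ℕ}

lemma one_imp_three
    (CC : ∀ i : Fin n, Submodule Λ (Fin (t i) → ↥(Pe Λ (e i)))) :
    -- (i) → (iii)
    ((∀ g : (∀ i : Fin n, Fin (t i) → ↥(Pe Λ (e i))) ≃ₗ[Λ]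
          (∀ i : Fin n, Fin (t i) → ↥(Pe Λ (e i))),
        Submodule.map (g : (∀ i : Fin n, Fin (t i) → ↥(Pe Λ (e i))) →ₗ[Λ] _)
            (Submodule.pi Set.univ CC) =
          ⨆ i : Fin n,
            (Submodule.map (g : (∀ i : Fin n, Fin (t i) → ↥(Pe Λ (e i))) →ₗ[Λ] _)
                (Submodule.pi Set.univ CC) ⊓
              LinearMap.range
                (LinearMap.single Λ (fun i : Fin n => Fin (t i) → ↥(Pe Λ (e i))) i))) →
      (∀ i k : Fin n, i ≠ k →
        ∀ f : (Fin (t i) → ↥(Pe Λ (e i))) →ₗ[Λ] (Fin (t k) → ↥(Pe Λ (e k))),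
          Submodule.map f (CC i) ≤ CC k)) := by
  classical
  intro hi i k hik φ
  rintro _ ⟨c, hc, rfl⟩
  set P := ∀ i : Fin n, Fin (t i) → ↥(Pe Λ (e i)) with hP
  set N : P →ₗ[Λ] P :=
    (LinearMap.single Λ (fun i : Fin n => Fin (t i) → ↥(Pe Λ (e i))) k) ∘ₗ φ ∘ₗ
      (LinearMap.proj i) with hN
  have hNapp : ∀ x : P, N x = Pi.single k (φ (x i)) := fun x => rfl
  have hNN : ∀ x : P, N (N x) = 0 := by
    intro x
    rw [hNapp, hNapp]
    have : (Pi.single k (φ (x i)) : P) i = 0 := Pi.single_eq_of_ne hik _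
    rw [this, map_zero]
    exact Pi.single_zero _
  set g : P ≃ₗ[Λ] P := LinearEquiv.ofLinear (LinearMap.id + N) (LinearMap.id - N)
    (LinearMap.ext fun x => by
        simp only [LinearMap.coe_comp, Function.comp_apply, LinearMap.add_apply,
          LinearMap.sub_apply, LinearMap.id_apply, map_sub, LinearMap.id_coe, id_eq]
        rw [hNN x]
        abel)
    (LinearMap.ext fun x => by
        simp only [LinearMap.coe_comp, Function.comp_apply, LinearMap.add_apply,
          LinearMap.sub_apply, LinearMap.id_apply, map_add, LinearMap.id_coe, id_eq]
        rw [hNN x]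
        abel) with hg
  have hgapp : ∀ x : P, g x = x + N x := fun x => rfl
  have hgsymm : ∀ x : P, g.symm x = x - N x := fun x => rfl
  set Q := Submodule.map (g : P →ₗ[Λ] P) (Submodule.pi Set.univ CC) with hQ
  have hQsup := hi g
  -- every component-single of an element of Q is in Q
  have hsingleQ : ∀ x, x ∈ Q → ∀ j, (Pi.single j (x j) : P) ∈ Q := by
    intro x hx j
    have hQ2 : Q = ⨆ i', (Q ⊓ LinearMap.range
        (LinearMap.single Λ (fun i : Fin n => Fin (t i) → ↥(Pe Λ (e i))) i')) := hQsup
    have hle : Q ≤ ⨅ j', Submodule.comap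
        ((LinearMap.single Λ (fun i : Fin n => Fin (t i) → ↥(Pe Λ (e i))) j') ∘ₗ
          (LinearMap.proj j')) Q := by
      refine le_trans (le_of_eq hQ2) ?_
      refine iSup_le fun j' => ?_
      rintro _ ⟨hxQ, v, rfl⟩
      refine Submodule.mem_iInf _ |>.mpr fun j'' => ?_
      simp only [Submodule.mem_comap, LinearMap.coe_comp, Function.comp_apply]
      by_cases hjj : j'' = j'
      · subst hjj
        show (Pi.single j'' ((Pi.single j'' v : P) j'') : P) ∈ Q
        rw [Pi.single_eq_same]
        exact hxQ
      · show (Pi.single j'' ((Pi.single j' v : P) j'') : P) ∈ Q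
        rw [Pi.single_eq_of_ne hjj]
        rw [Pi.single_zero]
        exact zero_mem _
    have := (Submodule.mem_iInf _).mp (hle hx) j
    exact this
  -- the element single i c is in C
  have hxC : (Pi.single i c : P) ∈ Submodule.pi Set.univ CC := by
    intro j _
    by_cases hji : j = i
    · subst hji; simpa using hc
    · show (Pi.single i c : P) j ∈ CC j
      rw [Pi.single_eq_of_ne hji]
      exact zero_mem _
  have hgxC : g (Pi.single i c) ∈ Q := Submodule.mem_map_of_mem hxC
  have hcompk : (g (Pi.single i c : P)) k = φ c := by
    rw [hgapp]
    show (Pi.single i c : P) k + (N (Pi.single i c)) k = φ c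
    rw [hNapp]
    have h1 : (Pi.single i c : P) k = 0 := Pi.single_eq_of_ne hik.symm _
    have h2 : (Pi.single k (φ ((Pi.single i c : P) i)) : P) k = φ ((Pi.single i c : P) i) :=
      Pi.single_eq_same _ _
    rw [h1, h2, Pi.single_eq_same, zero_add]
  have hsing : (Pi.single k (φ c) : P) ∈ Q := by
    have := hsingleQ _ hgxC k
    rwa [hcompk] at this
  obtain ⟨z, hzC, hgz⟩ := hsing
  have hzeq : z = Pi.single k (φ c) := by
    have : z = g.symm (Pi.single k (φ c)) := by
      rw [← hgz]
      exact (g.symm_apply_apply z).symm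
    rw [this, hgsymm]
    have : N (Pi.single k (φ c) : P) = 0 := by
      rw [hNapp]
      have : (Pi.single k (φ c) : P) i = 0 := Pi.single_eq_of_ne hik _
      rw [this, map_zero]
      exact Pi.single_zero _
    rw [this, sub_zero]
  have := hzC k (Set.mem_univ k)
  rw [hzeq] at this
  show φ c ∈ CC k
  have h3 : (Pi.single k (φ c) : P) k = φ c := Pi.single_eq_same _ _
  rwa [h3] at this

end Main
open Submodule

section Main2
variable {Λ : Type} [Ring Λ] {n : ℕ} {e : Fin n → Λ} {t : Fin n → ℕ}

lemma three_imp_two [IsArtinian Λ Λ] [IsNoetherian Λ Λ]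
    (hIdem : ∀ i, IsIdempotentElem (e i))
    (hPrim : ∀ i, ∀ f : Λ, IsIdempotentElem f → f * e i = f → e i * f = f →
      f = 0 ∨ f = e i)
    (hBasic : ∀ i j, i ≠ j → IsEmpty (↥(Pe Λ (e i)) ≃ₗ[Λ] ↥(Pe Λ (e j))))
    (CC : ∀ i : Fin n, Submodule Λ (Fin (t i) → ↥(Pe Λ (e i))))
    (hiii : ∀ i k : Fin n, i ≠ k →
        ∀ f : (Fin (t i) → ↥(Pe Λ (e i))) →ₗ[Λ] (Fin (t k) → ↥(Pe Λ (e k))),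
          Submodule.map f (CC i) ≤ CC k)
    (g : (∀ i : Fin n, Fin (t i) → ↥(Pe Λ (e i))) ≃ₗ[Λ]
          (∀ i : Fin n, Fin (t i) → ↥(Pe Λ (e i)))) :
    ∃ f : ∀ i : Fin n, (Fin (t i) → ↥(Pe Λ (e i))) ≃ₗ[Λ] (Fin (t i) → ↥(Pe Λ (e i))),
      Submodule.map (g : (∀ i : Fin n, Fin (t i) → ↥(Pe Λ (e i))) →ₗ[Λ] _)
          (Submodule.pi Set.univ CC) =
        Submodule.pi Set.univ (fun i => Submodule.map
          ((f i : (Fin (t i) → ↥(Pe Λ (e i))) →ₗ[Λ] (Fin (t i) → ↥(Pe Λ (e i)))))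
          (CC i)) := by
  classical
  haveI hfinPe : ∀ i : Fin n, Module.Finite Λ ↥(Pe Λ (e i)) := fun i =>
    Module.Finite.iff_fg.mpr (IsNoetherian.noetherian _)
  set P := ∀ i : Fin n, Fin (t i) → ↥(Pe Λ (e i)) with hP
  have hrad : ∀ (i k : Fin n), i ≠ k →
      ∀ (ψ : (Fin (t i) → ↥(Pe Λ (e i))) →ₗ[Λ] (Fin (t k) → ↥(Pe Λ (e k))))
        (v : Fin (t i) → ↥(Pe Λ (e i))),
      ψ v ∈ ((⊥ : Ideal Λ).jacobson • (⊤ : Submodule Λ (Fin (t k) → ↥(Pe Λ (e k))))) :=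
    fun i k hik ψ v => hom_pi_into_jac (hIdem i) (hIdem k)
      (fun gg h1 h2 h3 => hPrim i gg h1 h2 h3) (fun gg h1 h2 h3 => hPrim k gg h1 h2 h3)
      (hBasic i k hik) ψ v
  set gm : ∀ k j : Fin n,
      (Fin (t j) → ↥(Pe Λ (e j))) →ₗ[Λ] (Fin (t k) → ↥(Pe Λ (e k))) :=
    fun k j => (LinearMap.proj k) ∘ₗ (g : P →ₗ[Λ] P) ∘ₗ
      (LinearMap.single Λ (fun i : Fin n => Fin (t i) → ↥(Pe Λ (e i))) j) with hgm
  set hmm : ∀ k j : Fin n,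
      (Fin (t j) → ↥(Pe Λ (e j))) →ₗ[Λ] (Fin (t k) → ↥(Pe Λ (e k))) :=
    fun k j => (LinearMap.proj k) ∘ₗ (g.symm : P →ₗ[Λ] P) ∘ₗ
      (LinearMap.single Λ (fun i : Fin n => Fin (t i) → ↥(Pe Λ (e i))) j) with hhmm
  have hcomp : ∀ (φ : P →ₗ[Λ] P) (x : P) (k : Fin n),
      (φ x) k = ∑ j, (φ (Pi.single j (x j))) k := by
    intro φ x k
    conv_lhs => rw [← Finset.univ_sum_single x]
    rw [map_sum]
    exact Finset.sum_apply _ _ _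
  have hgcomp : ∀ (x : P) (k : Fin n), (g x) k = ∑ j, gm k j (x j) :=
    fun x k => hcomp (g : P →ₗ[Λ] P) x k
  have hhcomp : ∀ (x : P) (k : Fin n), (g.symm x) k = ∑ j, hmm k j (x j) :=
    fun x k => hcomp (g.symm : P →ₗ[Λ] P) x k
  have hkron : ∀ (l k : Fin n) (v : Fin (t l) → ↥(Pe Λ (e l))),
      ∑ j, hmm k j (gm j l v) = (Pi.single l v : P) k := by
    intro l k v
    have h1 : g.symm (g (Pi.single l v)) = Pi.single l v := g.symm_apply_apply _
    have h2 := congrFun h1 k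
    rw [hhcomp (g (Pi.single l v)) k] at h2
    exact h2
  have hsurj : ∀ k, Function.Surjective (gm k k) := by
    intro k
    have hrange : LinearMap.range (gm k k) ⊔
        ((⊥ : Ideal Λ).jacobson • (⊤ : Submodule Λ (Fin (t k) → ↥(Pe Λ (e k))))) = ⊤ := by
      rw [eq_top_iff]
      intro y _
      obtain ⟨x, hx⟩ := g.surjective (Pi.single k y)
      have h1 : y = ∑ j, gm k j (x j) := by
        have h0 := hgcomp x k
        rw [hx, Pi.single_eq_same] at h0
        exact h0
      have h2 : y - gm k k (x k) = ∑ j ∈ Finset.univ.erase k, gm k j (x j) := by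
        rw [h1, ← Finset.add_sum_erase _ _ (Finset.mem_univ k)]
        rw [add_sub_cancel_left]
      have h3 : y - gm k k (x k) ∈
          ((⊥ : Ideal Λ).jacobson • (⊤ : Submodule Λ (Fin (t k) → ↥(Pe Λ (e k))))) := by
        rw [h2]
        refine Submodule.sum_mem _ fun j hj => ?_
        exact hrad j k (Finset.mem_erase.mp hj).1 (gm k j) (x j)
      have h4 : y = gm k k (x k) + (y - gm k k (x k)) := by abel
      rw [h4]
      exact Submodule.add_mem_sup (LinearMap.mem_range_self _ _) h3
    have := nak_top hrange
    exact LinearMap.range_eq_top.mp this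
  have hbij : ∀ k, Function.Bijective (gm k k) := fun k =>
    ⟨IsNoetherian.injective_of_surjective_endomorphism _ (hsurj k), hsurj k⟩
  refine ⟨fun k => LinearEquiv.ofBijective _ (hbij k), ?_⟩
  apply le_antisymm
  · rintro _ ⟨x, hx, rfl⟩
    intro k _
    set a := x k + ∑ j ∈ Finset.univ.erase k,
      (LinearEquiv.ofBijective _ (hbij k)).symm (gm k j (x j)) with ha
    have haCC : a ∈ CC k := by
      refine add_mem (hx k (Set.mem_univ k)) (Submodule.sum_mem _ fun j hj => ?_)
      have hjk : j ≠ k := (Finset.mem_erase.mp hj).1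
      have s1 := hiii j k hjk
        ((((LinearEquiv.ofBijective _ (hbij k)).symm :
            (Fin (t k) → ↥(Pe Λ (e k))) ≃ₗ[Λ] _) :
            (Fin (t k) → ↥(Pe Λ (e k))) →ₗ[Λ] _) ∘ₗ (gm k j))
        (Submodule.mem_map_of_mem (hx j (Set.mem_univ j)))
      exact s1
    have hcancel : ∀ w, gm k k ((LinearEquiv.ofBijective _ (hbij k)).symm w) = w :=
      fun w => (LinearEquiv.ofBijective _ (hbij k)).apply_symm_apply w
    have hval : gm k k a = (g x) k := by
      rw [ha, map_add, map_sum]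
      calc gm k k (x k) + ∑ j ∈ Finset.univ.erase k,
            gm k k ((LinearEquiv.ofBijective _ (hbij k)).symm (gm k j (x j)))
          = gm k k (x k) + ∑ j ∈ Finset.univ.erase k, gm k j (x j) := by
            congr 1
            exact Finset.sum_congr rfl fun j _ => hcancel _
      _ = ∑ j, gm k j (x j) :=
            Finset.add_sum_erase _ (fun j => gm k j (x j)) (Finset.mem_univ k)
      _ = (g x) k := (hgcomp x k).symm
    exact ⟨a, haCC, hval⟩
  · intro d hd
    choose cfun hc1 hc2 using fun k => (hd k (Set.mem_univ k))
    refine ⟨g.symm d, ?_, g.apply_symm_apply d⟩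
    intro k _
    have h1 : (g.symm d) k = ∑ j, hmm k j (d j) := hhcomp d k
    have hdj : ∀ j, d j = gm j j (cfun j) := fun j => (hc2 j).symm
    have h2 : (g.symm d) k = hmm k k (gm k k (cfun k)) +
        ∑ j ∈ Finset.univ.erase k, hmm k j (gm j j (cfun j)) := by
      rw [h1, ← Finset.add_sum_erase _ (fun j => hmm k j (d j)) (Finset.mem_univ k), hdj k]
      congr 1
      exact Finset.sum_congr rfl fun j _ => by rw [hdj j]
    have h3 : hmm k k (gm k k (cfun k)) = cfun k -
        ∑ j ∈ Finset.univ.erase k, hmm k j (gm j k (cfun k)) := by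
      have h5 := hkron k k (cfun k)
      rw [← Finset.add_sum_erase _ (fun j => hmm k j (gm j k (cfun k)))
        (Finset.mem_univ k), Pi.single_eq_same] at h5
      exact eq_sub_of_add_eq h5
    have h6 : (g.symm d) k ∈ CC k := by
      rw [h2, h3]
      refine add_mem (sub_mem (hc1 k) (Submodule.sum_mem _ fun j hj => ?_))
        (Submodule.sum_mem _ fun j hj => ?_)
      · have hjk : j ≠ k := (Finset.mem_erase.mp hj).1
        have s1 : gm j k (cfun k) ∈ CC j :=
          hiii k j hjk.symm (gm j k) (Submodule.mem_map_of_mem (hc1 k))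
        exact hiii j k hjk (hmm k j) (Submodule.mem_map_of_mem s1)
      · have hjk : j ≠ k := (Finset.mem_erase.mp hj).1
        exact hiii j k hjk ((hmm k j) ∘ₗ (gm j j)) (Submodule.mem_map_of_mem (hc1 j))
    exact h6

end Main2

/-- Lemma 3.7: decomposition behaviour of `C = ⊕ C_i` under automorphisms of
`P = ⊕ P_i`, `P_i = (Λe_i)^{t_i}`. -/
theorem auto_image_decomposes_iff
    (K : Type) [Field K] [IsAlgClosed K]
    (Λ : Type) [Ring Λ] [Algebra K Λ] [FiniteDimensional K Λ]
    (n : ℕ) (e : Fin n → Λ)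
    (hIdem : ∀ i, IsIdempotentElem (e i))
    (hOrth : ∀ i j, i ≠ j → e i * e j = 0)
    (hSum : ∑ i, e i = 1)
    (hPrim : ∀ i, ∀ f : Λ, IsIdempotentElem f → f * e i = f → e i * f = f →
      f = 0 ∨ f = e i)
    (hBasic : ∀ i j, i ≠ j → IsEmpty (↥(Pe Λ (e i)) ≃ₗ[Λ] ↥(Pe Λ (e j))))
    (t : Fin n → ℕ)
    (CC : ∀ i : Fin n, Submodule Λ (Fin (t i) → ↥(Pe Λ (e i))))
    (hCC : ∀ i, CC i ≤ radsub Λ (Fin (t i) → ↥(Pe Λ (e i)))) :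
    -- (i) the image of `C` under any automorphism of `P` is the direct sum of its
    -- intersections with the canonical summands `P_i`
    ((∀ g : (∀ i : Fin n, Fin (t i) → ↥(Pe Λ (e i))) ≃ₗ[Λ]
          (∀ i : Fin n, Fin (t i) → ↥(Pe Λ (e i))),
        Submodule.map (g : (∀ i : Fin n, Fin (t i) → ↥(Pe Λ (e i))) →ₗ[Λ] _)
            (Submodule.pi Set.univ CC) =
          ⨆ i : Fin n,
            (Submodule.map (g : (∀ i : Fin n, Fin (t i) → ↥(Pe Λ (e i))) →ₗ[Λ] _)
                (Submodule.pi Set.univ CC) ⊓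
              LinearMap.range
                (LinearMap.single Λ (fun i : Fin n => Fin (t i) → ↥(Pe Λ (e i))) i))) ↔
      -- (ii) the image of `C` under any automorphism of `P` is `⊕ f_i(C_i)` for suitable
      -- automorphisms `f_i` of `P_i`
      (∀ g : (∀ i : Fin n, Fin (t i) → ↥(Pe Λ (e i))) ≃ₗ[Λ]
          (∀ i : Fin n, Fin (t i) → ↥(Pe Λ (e i))),
        ∃ f : ∀ i : Fin n, (Fin (t i) → ↥(Pe Λ (e i))) ≃ₗ[Λ] (Fin (t i) → ↥(Pe Λ (e i))),
          Submodule.map (g : (∀ i : Fin n, Fin (t i) → ↥(Pe Λ (e i))) →ₗ[Λ] _)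
              (Submodule.pi Set.univ CC) =
            Submodule.pi Set.univ (fun i => Submodule.map
              ((f i : (Fin (t i) → ↥(Pe Λ (e i))) →ₗ[Λ] (Fin (t i) → ↥(Pe Λ (e i)))))
              (CC i)))) ∧
    ((∀ g : (∀ i : Fin n, Fin (t i) → ↥(Pe Λ (e i))) ≃ₗ[Λ]
          (∀ i : Fin n, Fin (t i) → ↥(Pe Λ (e i))),
        Submodule.map (g : (∀ i : Fin n, Fin (t i) → ↥(Pe Λ (e i))) →ₗ[Λ] _)
            (Submodule.pi Set.univ CC) =
          ⨆ i : Fin n,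
            (Submodule.map (g : (∀ i : Fin n, Fin (t i) → ↥(Pe Λ (e i))) →ₗ[Λ] _)
                (Submodule.pi Set.univ CC) ⊓
              LinearMap.range
                (LinearMap.single Λ (fun i : Fin n => Fin (t i) → ↥(Pe Λ (e i))) i))) ↔
      -- (iii)
      (∀ i k : Fin n, i ≠ k →
        ∀ f : (Fin (t i) → ↥(Pe Λ (e i))) →ₗ[Λ] (Fin (t k) → ↥(Pe Λ (e k))),
          Submodule.map f (CC i) ≤ CC k)) := by
  classical
  haveI hart : IsArtinian Λ Λ := isArtinian_of_tower K (inferInstance : IsArtinian K Λ)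
  haveI hnoe : IsNoetherian Λ Λ := isNoetherian_of_tower K (inferInstance : IsNoetherian K Λ)
  refine ⟨⟨fun h1 g => three_imp_two hIdem hPrim hBasic CC (one_imp_three CC h1) g,
      fun h2 g => ?_⟩,
    ⟨fun h1 => one_imp_three CC h1, fun h3 g => ?_⟩⟩
  · obtain ⟨f, hf⟩ := h2 g
    exact two_imp_one CC g f hf
  · obtain ⟨f, hf⟩ := three_imp_two hIdem hPrim hBasic CC h3 g
    exact two_imp_one CC g f hf
end

section
/- Let P = ⊕_{i=1}^n P_i be a finite-dimensional left Λ-module with a fixed direct sum decomposition, with canonical injections ι_i : P_i → P and projections π_i : P → P_i, and let h : P → JP be a Λ-homomorphism. Then there exist Λ-homomorphisms ψ, χ : P → JP such that ψ(P_i) ⊆ P_i for all i, π_i ∘ χ ∘ ι_i = 0 for all i, and id_P + h = (id_P + ψ) ∘ (id_P + χ) as endomorphisms of P. -/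
open Submodule

section Aux

variable {Λ : Type} [Ring Λ]

lemma smul_mem_radsub {M : Type} [AddCommGroup M] [Module Λ M] {a : Λ}
    (ha : a ∈ (⊥ : Ideal Λ).jacobson) (m : M) : a • m ∈ radsub Λ M :=
  Submodule.subset_span ⟨a, ha, m, rfl⟩

lemma radsub_map_le {M N : Type} [AddCommGroup M] [Module Λ M] [AddCommGroup N] [Module Λ N]
    (f : M →ₗ[Λ] N) : Submodule.map f (radsub Λ M) ≤ radsub Λ N := by
  rw [radsub, Submodule.map_span, Submodule.span_le]
  rintro _ ⟨x, ⟨a, ha, m, rfl⟩, rfl⟩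
  rw [map_smul]
  exact smul_mem_radsub ha (f m)

lemma apply_mem_radsub {M N : Type} [AddCommGroup M] [Module Λ M] [AddCommGroup N] [Module Λ N]
    (f : M →ₗ[Λ] N) {x : M} (hx : x ∈ radsub Λ M) : f x ∈ radsub Λ N :=
  radsub_map_le f ⟨x, hx, rfl⟩

lemma jac_mul_mem {a c : Λ} (ha : a ∈ (⊥ : Ideal Λ).jacobson) :
    a * c ∈ (⊥ : Ideal Λ).jacobson :=
  (⊥ : Ideal Λ).jacobson.mul_mem_right c ha

/-- noncommutative Nakayama -/
lemma nakayama_aux {M : Type} [AddCommGroup M] [Module Λ M] :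
    ∀ (k : ℕ) (s : Finset M), s.card ≤ k → Submodule.span Λ (s : Set M) = ⊤ →
      radsub Λ M = ⊤ → ∀ x : M, x = 0 := by
  classical
  intro k
  induction k with
  | zero =>
    intro s hcard hspan _ x
    have hs : s = ∅ := Finset.card_eq_zero.mp (Nat.le_zero.mp hcard)
    subst hs
    simp only [Finset.coe_empty, Submodule.span_empty] at hspan
    exact (Submodule.eq_bot_iff _).mp hspan.symm x Submodule.mem_top
  | succ k ih =>
    intro s hcard hspan hrad x0
    rcases s.eq_empty_or_nonempty with hs | ⟨x, hx⟩
    · subst hs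
      simp only [Finset.coe_empty, Submodule.span_empty] at hspan
      exact (Submodule.eq_bot_iff _).mp hspan.symm x0 Submodule.mem_top
    · set t := s.erase x with ht
      set T := Submodule.span Λ (t : Set M) with hT
      set Jx : Submodule Λ M :=
        Submodule.map (LinearMap.toSpanSingleton Λ M x) ((⊥ : Ideal Λ).jacobson) with hJx
      have claim : ∀ m ∈ Submodule.span Λ (s : Set M), ∀ a ∈ (⊥ : Ideal Λ).jacobson,
          a • m ∈ Jx ⊔ T := by
        intro m hm
        induction hm using Submodule.span_induction with
        | mem y hy =>
          intro a ha
          rcases eq_or_ne y x with rfl | hyx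
          · exact Submodule.mem_sup_left ⟨a, ha, rfl⟩
          · exact Submodule.mem_sup_right
              (T.smul_mem a (Submodule.subset_span (Finset.mem_erase.mpr ⟨hyx, hy⟩)))
        | zero => intro a _; rw [smul_zero]; exact Submodule.zero_mem _
        | add y z _ _ hy hz =>
          intro a ha; rw [smul_add]; exact Submodule.add_mem _ (hy a ha) (hz a ha)
        | smul c m _ hm =>
          intro a ha; rw [smul_smul]; exact hm (a * c) (jac_mul_mem ha)
      have hradle : radsub Λ M ≤ Jx ⊔ T := by
        rw [radsub, Submodule.span_le]
        rintro _ ⟨a, ha, m, rfl⟩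
        exact claim m (hspan ▸ Submodule.mem_top) a ha
      have hxmem : x ∈ Jx ⊔ T := hradle (hrad ▸ Submodule.mem_top)
      obtain ⟨u, hu, z, hz, huz⟩ := Submodule.mem_sup.mp hxmem
      obtain ⟨j, hj, rfl⟩ := hu
      have hsub : (1 - j) • x ∈ T := by
        have h2 : z = x - j • x := by
          have h3 : LinearMap.toSpanSingleton Λ M x j = j • x := rfl
          rw [← h3]
          exact (eq_sub_of_add_eq' huz)
        have h4 : (1 - j) • x = z := by rw [h2, sub_smul, one_smul]
        rw [h4]; exact hz
      obtain ⟨c, hc⟩ := Ideal.exists_mul_sub_mem_of_sub_one_mem_jacobson (1 - j)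
        (by simpa using ((⊥ : Ideal Λ).jacobson.neg_mem hj))
      rw [Ideal.mem_bot, sub_eq_zero] at hc
      have hxT : x ∈ T := by
        have : x = c • ((1 - j) • x) := by rw [smul_smul, hc, one_smul]
        rw [this]; exact T.smul_mem c hsub
      have hTtop : T = ⊤ := by
        rw [eq_top_iff, ← hspan, Submodule.span_le]
        intro y hy
        rcases eq_or_ne y x with rfl | hyx
        · exact hxT
        · exact Submodule.subset_span (Finset.mem_erase.mpr ⟨hyx, hy⟩)
      have hcard' : t.card ≤ k := by
        have h2 : t.card = s.card - 1 := by rw [ht]; exact Finset.card_erase_of_mem hx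
        have h1 : 1 ≤ s.card := Finset.card_pos.mpr ⟨x, hx⟩
        omega
      exact ih t hcard' hTtop hrad x0

lemma idadd_surjective {M : Type} [AddCommGroup M] [Module Λ M] [Module.Finite Λ M]
    (φ : M →ₗ[Λ] M) (hφ : ∀ m, φ m ∈ radsub Λ M) :
    Function.Surjective ((LinearMap.id : M →ₗ[Λ] M) + φ) := by
  rw [← LinearMap.range_eq_top]
  set N := LinearMap.range ((LinearMap.id : M →ₗ[Λ] M) + φ) with hN
  have : Module.Finite Λ (M ⧸ N) := Module.Finite.of_surjective N.mkQ N.mkQ_surjective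
  have hq : ∀ m : M, N.mkQ m ∈ radsub Λ (M ⧸ N) := by
    intro m
    have h0 : N.mkQ (((LinearMap.id : M →ₗ[Λ] M) + φ) m) = 0 := by
      rw [← LinearMap.mem_ker, Submodule.ker_mkQ]
      exact ⟨m, rfl⟩
    have : N.mkQ m = - N.mkQ (φ m) := by
      rw [LinearMap.add_apply, LinearMap.id_apply, map_add] at h0
      linear_combination (norm := abel) h0
    rw [this]
    exact Submodule.neg_mem _ (apply_mem_radsub N.mkQ (hφ m))
  have hrad : radsub Λ (M ⧸ N) = ⊤ := by
    rw [eq_top_iff]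
    intro q _
    obtain ⟨m, rfl⟩ := N.mkQ_surjective q
    exact hq m
  obtain ⟨s, hs⟩ := (Module.Finite.fg_top (R := Λ) (M := M ⧸ N) : (⊤ : Submodule Λ (M ⧸ N)).FG)
  have hzero := nakayama_aux s.card s le_rfl hs hrad
  rw [eq_top_iff]
  intro m _
  have := hzero (N.mkQ m)
  rwa [Submodule.mkQ_apply, Submodule.Quotient.mk_eq_zero] at this

lemma idadd_bijective {M : Type} [AddCommGroup M] [Module Λ M] [Module.Finite Λ M]
    [IsNoetherian Λ M] (φ : M →ₗ[Λ] M) (hφ : ∀ m, φ m ∈ radsub Λ M) :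
    Function.Bijective ((LinearMap.id : M →ₗ[Λ] M) + φ) :=
  IsNoetherian.bijective_of_surjective_endomorphism _ (idadd_surjective φ hφ)

end Aux

/-- The factorization `id + h = (id + ψ)(id + χ)` from the proof of Lemma 3.7, where
`ψ` preserves each canonical summand and `χ` has vanishing diagonal components. -/
theorem factor_unipotent_automorphism
    (K : Type) [Field K] [IsAlgClosed K]
    (Λ : Type) [Ring Λ] [Algebra K Λ] [FiniteDimensional K Λ]
    (n : ℕ) (Pmod : Fin n → Type)
    [∀ i, AddCommGroup (Pmod i)] [∀ i, Module Λ (Pmod i)] [∀ i, Module.Finite Λ (Pmod i)]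
    (h : (∀ i, Pmod i) →ₗ[Λ] (∀ i, Pmod i))
    (hh : LinearMap.range h ≤ radsub Λ (∀ i, Pmod i)) :
    ∃ ψ χ : (∀ i, Pmod i) →ₗ[Λ] (∀ i, Pmod i),
      LinearMap.range ψ ≤ radsub Λ (∀ i, Pmod i) ∧
      LinearMap.range χ ≤ radsub Λ (∀ i, Pmod i) ∧
      -- `ψ(P_i) ⊆ P_i`
      (∀ i, Submodule.map ψ (LinearMap.range (LinearMap.single Λ Pmod i)) ≤
        LinearMap.range (LinearMap.single Λ Pmod i)) ∧
      -- `π_i ∘ χ ∘ ι_i = 0`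
      (∀ i, (LinearMap.proj i : (∀ i, Pmod i) →ₗ[Λ] Pmod i).comp
        (χ.comp (LinearMap.single Λ Pmod i)) = 0) ∧
      LinearMap.id + h = (LinearMap.id + ψ).comp (LinearMap.id + χ) := by
  classical
  have hNoethΛ : IsNoetherianRing Λ := isNoetherian_of_tower K (inferInstance : IsNoetherian K Λ)
  -- the diagonal components of h
  set φ : ∀ i, Pmod i →ₗ[Λ] Pmod i :=
    fun i => (LinearMap.proj i).comp (h.comp (LinearMap.single Λ Pmod i)) with hφdef
  have hφrad : ∀ i, ∀ x : Pmod i, φ i x ∈ radsub Λ (Pmod i) := by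
    intro i x
    exact apply_mem_radsub (LinearMap.proj i) (hh ⟨LinearMap.single Λ Pmod i x, rfl⟩)
  have hbij : ∀ i, Function.Bijective ⇑((LinearMap.id : Pmod i →ₗ[Λ] Pmod i) + φ i) :=
    fun i => idadd_bijective (φ i) (hφrad i)
  set e : ∀ i, Pmod i ≃ₗ[Λ] Pmod i :=
    fun i => LinearEquiv.ofBijective (LinearMap.id + φ i) (hbij i) with hedef
  set E : (∀ i, Pmod i) ≃ₗ[Λ] (∀ i, Pmod i) := LinearEquiv.piCongrRight e with hEdef
  set ψ : (∀ i, Pmod i) →ₗ[Λ] (∀ i, Pmod i) :=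
    LinearMap.pi (fun i => (φ i).comp (LinearMap.proj i)) with hψdef
  have hψapp : ∀ (x : ∀ i, Pmod i) (i : Fin n), ψ x i = φ i (x i) := fun x i => rfl
  have hEapp : ∀ (x : ∀ i, Pmod i), E x = x + ψ x := by
    intro x
    funext i
    show e i (x i) = x i + ψ x i
    rw [hψapp]
    rfl
  have hψrad : LinearMap.range ψ ≤ radsub Λ (∀ i, Pmod i) := by
    rintro _ ⟨x, rfl⟩
    have hx : ψ x = ∑ i, Pi.single i (φ i (x i)) := by
      rw [Finset.univ_sum_single (fun i => φ i (x i))]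
      funext i; exact hψapp x i
    rw [hx]
    refine Submodule.sum_mem _ fun i _ => ?_
    have := apply_mem_radsub (LinearMap.single Λ Pmod i) (hφrad i (x i))
    simpa using this
  set χ : (∀ i, Pmod i) →ₗ[Λ] (∀ i, Pmod i) := E.symm.toLinearMap.comp (h - ψ) with hχdef
  have hEsymm : ∀ z, E.symm z = z - ψ (E.symm z) := by
    intro z
    have h1 : E (E.symm z) = z := E.apply_symm_apply z
    rw [hEapp] at h1
    linear_combination (norm := abel) h1
  have hEsymm_rad : ∀ z, z ∈ radsub Λ (∀ i, Pmod i) → E.symm z ∈ radsub Λ (∀ i, Pmod i) := by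
    intro z hz
    rw [hEsymm z]
    exact Submodule.sub_mem _ hz (hψrad ⟨E.symm z, rfl⟩)
  refine ⟨ψ, χ, hψrad, ?_, ?_, ?_, ?_⟩
  · -- range χ ≤ radsub
    rintro _ ⟨x, rfl⟩
    refine hEsymm_rad _ ?_
    show h x - ψ x ∈ _
    exact Submodule.sub_mem _ (hh ⟨x, rfl⟩) (hψrad ⟨x, rfl⟩)
  · -- ψ preserves summands
    intro i
    rintro _ ⟨_, ⟨v, rfl⟩, rfl⟩
    refine ⟨φ i v, ?_⟩
    funext j
    show Pi.single i (φ i v) j = φ j ((Pi.single i v : ∀ k, Pmod k) j)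
    rcases eq_or_ne j i with rfl | hji
    · simp
    · rw [Pi.single_eq_of_ne hji, Pi.single_eq_of_ne hji, map_zero]
  · -- diagonal of χ vanishes
    intro i
    ext x
    show ((E.symm ((h - ψ) (Pi.single i x))) i) = 0
    have hz : ((h - ψ) (Pi.single i x) : ∀ k, Pmod k) i = 0 := by
      show h (Pi.single i x) i - ψ (Pi.single i x) i = 0
      rw [hψapp]
      have : φ i ((Pi.single i x : ∀ k, Pmod k) i) = h (Pi.single i x) i := by
        rw [Pi.single_eq_same]; rfl
      rw [this, sub_self]
    have : E.symm ((h - ψ) (Pi.single i x)) i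
        = (e i).symm (((h - ψ) (Pi.single i x) : ∀ k, Pmod k) i) := by
      rw [hEdef]
      simp [LinearEquiv.piCongrRight]
      rfl
    rw [this, hz, map_zero]
  · -- the factorization
    refine LinearMap.ext fun x => ?_
    show x + h x
      = ((LinearMap.id : (∀ i, Pmod i) →ₗ[Λ] (∀ i, Pmod i)) + ψ)
        (((LinearMap.id : (∀ i, Pmod i) →ₗ[Λ] (∀ i, Pmod i)) + χ) x)
    have h1 : ((LinearMap.id : (∀ i, Pmod i) →ₗ[Λ] (∀ i, Pmod i)) + χ) x
        = x + E.symm (h x - ψ x) := rfl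
    have h2 : ∀ y, ((LinearMap.id : (∀ i, Pmod i) →ₗ[Λ] (∀ i, Pmod i)) + ψ) y = E y :=
      fun y => (hEapp y).symm
    rw [h1, h2, map_add, E.apply_symm_apply, hEapp]
    abel
end
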